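/- arXiv:1807.02801 — 2 statements merged into one kernel-verified Lean document; each statement's English description precedes it below -/
import Mathlib

section
/- Let r, ℓ > 0, w < 0, 0 ≤ m ≤ M, and suppose (R, W) solves Ṙ = W/√(1 + W² + ℓR⁻²), Ẇ = ℓ/(R³√(1 + W² + ℓR⁻²)) + m(t,R)/R², with R(0) = r, W(0) = w, R(t) > 0 for all t ≥ 0, and 0 ≤ m(t,R(t)) ≤ M. If W(t) ≤ 0 for all t ∈ [0, T₀] then W(t)² + ℓ R(t)⁻² ≤ w² + ℓ r⁻² for all t ∈ [0, T₀]. -/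
theorem kinetic_energy_nonincreasing (r ℓ w M T₀ : ℝ)
    (hr : 0 < r) (hl : 0 < ℓ) (hw : w < 0) (hT : 0 ≤ T₀)
    (R W : ℝ → ℝ) (m : ℝ → ℝ → ℝ)
    (hRderiv : ∀ t ≥ (0:ℝ), HasDerivAt R
      (W t / Real.sqrt (1 + W t ^ 2 + ℓ * (R t)⁻¹ ^ 2)) t)
    (hWderiv : ∀ t ≥ (0:ℝ), HasDerivAt W
      (ℓ / (R t ^ 3 * Real.sqrt (1 + W t ^ 2 + ℓ * (R t)⁻¹ ^ 2))
        + m t (R t) / R t ^ 2) t)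
    (hR0 : R 0 = r) (hW0 : W 0 = w)
    (hRpos : ∀ t ≥ (0:ℝ), 0 < R t)
    (hm : ∀ t ≥ (0:ℝ), 0 ≤ m t (R t) ∧ m t (R t) ≤ M)
    (hWneg : ∀ t ∈ Set.Icc 0 T₀, W t ≤ 0) :
    ∀ t ∈ Set.Icc 0 T₀,
      W t ^ 2 + ℓ * (R t)⁻¹ ^ 2 ≤ w ^ 2 + ℓ * r⁻¹ ^ 2 := by
  set E : ℝ → ℝ := fun s => W s ^ 2 + ℓ * (R s)⁻¹ ^ 2 with hEdef
  have key : ∀ s ≥ (0:ℝ), HasDerivAt E (2 * W s * (m s (R s) / R s ^ 2)) s := by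
    intro s hs
    have hRs := hRpos s hs
    have hRne : R s ≠ 0 := ne_of_gt hRs
    have hsqpos : 0 < Real.sqrt (1 + W s ^ 2 + ℓ * (R s)⁻¹ ^ 2) := by
      apply Real.sqrt_pos.mpr; positivity
    have h1 := (hWderiv s hs).pow 2
    have h2 := ((hRderiv s hs).inv hRne).pow 2
    have h3 := (h1.add (h2.const_mul ℓ))
    convert h3 using 1
    have hsqne := ne_of_gt hsqpos
    · rfl
    · rfl
    · rfl
    simp only [Pi.inv_apply]
    field_simp
    linear_combination (W s * ℓ * 2) * mul_inv_cancel₀ hRne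
  have cont : ContinuousOn E (Set.Icc 0 T₀) := fun s hs =>
    (key s hs.1).continuousAt.continuousWithinAt
  have hdiff : DifferentiableOn ℝ E (interior (Set.Icc 0 T₀)) := by
    rw [interior_Icc]
    exact fun s hs => ((key s hs.1.le).differentiableAt).differentiableWithinAt
  have hnonpos : ∀ s ∈ interior (Set.Icc 0 T₀), deriv E s ≤ 0 := by
    rw [interior_Icc]
    intro s hs
    rw [(key s hs.1.le).deriv]
    have hWs : W s ≤ 0 := hWneg s ⟨hs.1.le, hs.2.le⟩
    have hms : 0 ≤ m s (R s) := (hm s hs.1.le).1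
    have hRs := hRpos s hs.1.le
    have : 0 ≤ m s (R s) / R s ^ 2 := by positivity
    have h2w : 2 * W s ≤ 0 := by linarith
    exact mul_nonpos_of_nonpos_of_nonneg h2w this
  have anti : AntitoneOn E (Set.Icc 0 T₀) :=
    antitoneOn_of_deriv_nonpos (convex_Icc 0 T₀) cont hdiff hnonpos
  intro t ht
  have h0 : (0:ℝ) ∈ Set.Icc 0 T₀ := ⟨le_refl 0, hT⟩
  have := anti h0 ht ht.1
  simpa [hEdef, hR0, hW0] using this
end

section
/- Let A > 0, B ≥ 0, and let R : [0, T₀] → (0, ∞) be continuously differentiable with Ṙ(t) ≤ 0, R(0) = r > 0, satisfying |½ d/dt (R(t)²)|² ≥ A R(t)² - B whenever R(t)² > B/A. Then for all t ∈ [0, T₀], R(t)² ≤ max{ B/A, r² - 2t√(Ar² - B) + A t² } (assuming Ar² ≥ B). -/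
theorem ode_comparison (A B r T₀ : ℝ) (hA : 0 < A) (hB : 0 ≤ B)
    (hr : 0 < r) (hT : 0 ≤ T₀) (hArB : A * r ^ 2 ≥ B)
    (R R' : ℝ → ℝ)
    (hRderiv : ∀ t ∈ Set.Icc 0 T₀, HasDerivAt R (R' t) t)
    (hR'le : ∀ t ∈ Set.Icc 0 T₀, R' t ≤ 0)
    (hRpos : ∀ t ∈ Set.Icc 0 T₀, 0 < R t)
    (hR0 : R 0 = r)
    (hineq : ∀ t ∈ Set.Icc 0 T₀, R t ^ 2 > B / A →
      |R t * R' t| ^ 2 ≥ A * R t ^ 2 - B) :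
    ∀ t ∈ Set.Icc 0 T₀,
      R t ^ 2 ≤ max (B / A)
        (r ^ 2 - 2 * t * Real.sqrt (A * r ^ 2 - B) + A * t ^ 2) := by
  intro t ht
  obtain ⟨ht0, htT⟩ := ht
  by_cases hcase : R t ^ 2 ≤ B / A
  · exact le_max_of_le_left hcase
  push_neg at hcase
  have hcont : ContinuousOn R (Set.Icc 0 T₀) := fun s hs =>
    (hRderiv s hs).continuousAt.continuousWithinAt
  -- R is antitone on [0, T₀]
  have hanti : AntitoneOn R (Set.Icc 0 T₀) := by
    apply antitoneOn_of_deriv_nonpos (convex_Icc 0 T₀) hcont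
    · intro s hs
      rw [interior_Icc] at hs
      exact ((hRderiv s ⟨hs.1.le, hs.2.le⟩).differentiableAt).differentiableWithinAt
    · intro s hs
      rw [interior_Icc] at hs
      have hs' : s ∈ Set.Icc 0 T₀ := ⟨hs.1.le, hs.2.le⟩
      rw [(hRderiv s hs').deriv]
      exact hR'le s hs'
  have hsubI : ∀ s ∈ Set.Icc 0 t, s ∈ Set.Icc 0 T₀ := fun s hs =>
    ⟨hs.1, hs.2.trans htT⟩
  -- on [0, t] we have A R s ^ 2 - B > 0
  have key : ∀ s ∈ Set.Icc 0 t, 0 < A * R s ^ 2 - B := by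
    intro s hs
    have hsT := hsubI s hs
    have hRts : R t ≤ R s := hanti hsT ⟨ht0, htT⟩ hs.2
    have h1 : R t ^ 2 ≤ R s ^ 2 := by
      have := (hRpos t ⟨ht0, htT⟩).le
      nlinarith
    have h2 : B / A < R s ^ 2 := lt_of_lt_of_le hcase h1
    rw [div_lt_iff₀ hA] at h2
    nlinarith
  set f : ℝ → ℝ := fun s => Real.sqrt (A * R s ^ 2 - B) + A * s with hf
  have hfderiv : ∀ s ∈ Set.Icc 0 t,
      HasDerivAt f (A * (2 * R s * R' s) / (2 * Real.sqrt (A * R s ^ 2 - B)) + A) s := by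
    intro s hs
    have hsT := hsubI s hs
    have hu : HasDerivAt (fun s => A * R s ^ 2 - B) (A * (2 * R s * R' s)) s := by
      have h1 := (hRderiv s hsT).pow 2
      have h2 := (h1.const_mul A).sub_const B
      exact h2.congr_deriv (by norm_num)
    have hsq := (Real.hasDerivAt_sqrt (ne_of_gt (key s hs))).comp s hu
    have := hsq.add ((hasDerivAt_id s).const_mul A)
    exact this.congr_deriv (by field_simp)
  -- f is antitone on [0, t]
  have hfanti : AntitoneOn f (Set.Icc 0 t) := by
    apply antitoneOn_of_deriv_nonpos (convex_Icc 0 t)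
    · exact fun s hs => (hfderiv s hs).continuousAt.continuousWithinAt
    · intro s hs
      rw [interior_Icc] at hs
      exact (hfderiv s ⟨hs.1.le, hs.2.le⟩).differentiableAt.differentiableWithinAt
    · intro s hs
      rw [interior_Icc] at hs
      have hs' : s ∈ Set.Icc 0 t := ⟨hs.1.le, hs.2.le⟩
      have hsT := hsubI s hs'
      rw [(hfderiv s hs').deriv]
      -- show the derivative is nonpositive
      have hks := key s hs'
      have hsqrtpos : 0 < Real.sqrt (A * R s ^ 2 - B) := Real.sqrt_pos.2 hks
      have hBA : B / A < R s ^ 2 := by rw [div_lt_iff₀ hA]; nlinarith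
      have h1 := hineq s hsT hBA
      have h2 : Real.sqrt (A * R s ^ 2 - B) ≤ |R s * R' s| := by
        rw [show |R s * R' s| = Real.sqrt (|R s * R' s| ^ 2) from
          (Real.sqrt_sq (abs_nonneg _)).symm]
        exact Real.sqrt_le_sqrt h1
      have h3 : R s * R' s ≤ 0 :=
        mul_nonpos_of_nonneg_of_nonpos (hRpos s hsT).le (hR'le s hsT)
      rw [abs_of_nonpos h3] at h2
      have h4 : R s * R' s ≤ -Real.sqrt (A * R s ^ 2 - B) := by linarith
      have h5 : A * (2 * R s * R' s) / (2 * Real.sqrt (A * R s ^ 2 - B)) ≤ -A := by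
        rw [div_le_iff₀ (by positivity)]
        nlinarith
      linarith
  have hft : f t ≤ f 0 := hfanti ⟨le_refl 0, ht0⟩ ⟨ht0, le_refl t⟩ ht0
  have hkt := key t ⟨ht0, le_refl t⟩
  have hut : Real.sqrt (A * R t ^ 2 - B) ^ 2 = A * R t ^ 2 - B := Real.sq_sqrt hkt.le
  have hvt : Real.sqrt (A * r ^ 2 - B) ^ 2 = A * r ^ 2 - B := Real.sq_sqrt (by linarith)
  have hunn : 0 ≤ Real.sqrt (A * R t ^ 2 - B) := Real.sqrt_nonneg _
  have hf0 : f 0 = Real.sqrt (A * r ^ 2 - B) := by simp [hf, hR0]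
  rw [hf0] at hft
  simp only [hf] at hft
  apply le_max_of_le_right
  nlinarith [hft, hut, hvt, hunn, Real.sqrt_nonneg (A * r ^ 2 - B)]
end
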